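/- For every n ≥ 2, every primitive n-th root of unity ζ_n ∈ ℂ, and all w, w' ∈ Ĥ¹, it holds that z_n(w *_q w') = z_n(w) · z_n(w'). -/

import Mathlib

noncomputable section

/-- The coefficient ring `𝒞 = ℚ[ℏ, ℏ⁻¹]`, realized as Laurent polynomials over `ℚ`. -/
abbrev CC : Type := LaurentPolynomial ℚ

/-- The variable `ℏ ∈ 𝒞`. -/
def hb : CC := LaurentPolynomial.T 1

/-- Embedding of rational constants into `𝒞`. -/
def qs (x : ℚ) : CC := algebraMap ℚ CC x

/-- The non-commutative polynomial ring `H = 𝒞⟨a, b⟩`. -/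
abbrev H : Type := FreeAlgebra CC (Fin 2)

/-- The generator `a`. -/
def av : H := FreeAlgebra.ι CC 0

/-- The generator `b`. -/
def bv : H := FreeAlgebra.ι CC 1

/-- `e k` for `k : ℕ`:  `e 0 = e_{1̄} = ab`, and `e (k+1) = e_{k+1} = a^k (a+ℏ) b`. -/
def ev : ℕ → H
  | 0 => av * bv
  | (k+1) => av ^ k * (av + algebraMap CC H hb) * bv

/-- The monomial `e_{k_1} ⋯ e_{k_r}` attached to an index (a list over `N̂`,
with `0` encoding `1̄` and `k+1` encoding the positive integer `k+1`). -/
def eword (l : List ℕ) : H := (l.map ev).prod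

/-- `Ĥ¹`, as the `𝒞`-span of all monomials `e_k` (this coincides with the subalgebra
freely generated by the `e_k`). -/
def H1 : Submodule CC H := Submodule.span CC {x : H | ∃ l : List ℕ, x = eword l}

/-- `Ĥ⁰`, the `𝒞`-span of monomials `e_k` with `k ∈ Î₀` (first entry `≠ 1`). -/
def H0 : Submodule CC H := Submodule.span CC
  {x : H | ∃ l : List ℕ, l.head? ≠ some 1 ∧ x = eword l}

/-- The circle product `∘_q` on the generators. -/
def circ : ℕ → ℕ → H
  | 0, 0 => ev 2 - hb • ev 0
  | 0, (l+1) => ev (l+2)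
  | (k+1), 0 => ev (k+2)
  | (k+1), (l+1) => ev (k+l+2) + hb • ev (k+l+1)

/-- The defining properties of the shuffle product `⧢_q` on `H`. -/
def IsShuffle (sh : H →ₗ[CC] H →ₗ[CC] H) : Prop :=
  (∀ w : H, sh 1 w = w) ∧ (∀ w : H, sh w 1 = w) ∧
  (∀ w w' : H, sh (av * w) (av * w') =
      av * (sh (av * w) w' + sh w (av * w') + hb • sh w w')) ∧
  (∀ w w' : H, sh (bv * w) w' = bv * sh w w') ∧
  (∀ w w' : H, sh w (bv * w') = bv * sh w w')

/-- The defining properties of the stuffle product `*_q` on `Ĥ¹`. -/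
def IsStuffle (st : H →ₗ[CC] H →ₗ[CC] H) : Prop :=
  (∀ w : H, st 1 w = w) ∧ (∀ w : H, st w 1 = w) ∧
  (∀ k l : ℕ, ∀ w w' : H, w ∈ H1 → w' ∈ H1 →
    st (ev k * w) (ev l * w') =
      ev k * st w (ev l * w') + ev l * st (ev k * w) w' + circ k l * st w w')

/-- The q-integer `[m] = (1-q^m)/(1-q)`. -/
def qint (q : ℂ) (m : ℕ) : ℂ := (1 - q ^ m) / (1 - q)

/-- `F_k(m)`:  `F 0 = F_{1̄}` and `F (k+1) = F_{k+1}`. -/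
def Fq (q : ℂ) : ℕ → ℕ → ℂ
  | 0, m => q ^ m / qint q m
  | (k+1), m => q ^ (k * m) / (qint q m) ^ (k + 1)

/-- `ζ_q(k)` for an index `k` (a list over `N̂`): the sum over `m_1 > ⋯ > m_r ≥ 1`. -/
def zetaq (q : ℂ) (l : List ℕ) : ℂ :=
  ∑' m : {f : Fin l.length → ℕ // StrictAnti f ∧ ∀ i, 0 < f i},
    ∏ i : Fin l.length, Fq q (l.get i) (m.1 i)

/-- The defining properties of the `𝒞`-linear map `Z_q` (as a map on all of `H`
extending the one on `Ĥ⁰`): additive, `𝒞`-semilinear along `ρ`, sending `e_k ↦ ζ_q(k)`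
for `k ∈ Î₀`. -/
def IsZq (ρ : CC →ₐ[ℚ] ℂ) (q : ℂ) (Z : H →+ ℂ) : Prop :=
  (∀ c : CC, ∀ w : H, Z (c • w) = ρ c * Z w) ∧
  (∀ l : List ℕ, l.head? ≠ some 1 → Z (eword l) = zetaq q l)


open Classical in
/-- The finite multiple harmonic q-series at a root of unity:
`z_n(k; q) = Σ_{n>m_1>⋯>m_r≥1} Π_j F_{k_j}(m_j)` (for `q` an `n`-th root of unity). -/
def zfin (n : ℕ) (q : ℂ) (l : List ℕ) : ℂ :=
  ∑ f : Fin l.length → Fin n,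
    if (StrictAnti fun i => ((f i : ℕ))) ∧ (∀ i, 0 < ((f i : ℕ))) then
      ∏ i : Fin l.length, Fq q (l.get i) ((f i : ℕ))
    else 0

/-- The defining properties of the `𝒞`-linear map `z_n : Ĥ¹ → ℂ` (extended to `H`):
additive, `𝒞`-semilinear along `ρ`, sending `e_k ↦ z_n(k; ζ_n)` for every index `k`. -/
def IsZn (ρ : CC →ₐ[ℚ] ℂ) (n : ℕ) (q : ℂ) (Z : H →+ ℂ) : Prop :=
  (∀ c : CC, ∀ w : H, Z (c • w) = ρ c * Z w) ∧
  (∀ l : List ℕ, Z (eword l) = zfin n q l)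

/-- Truncated multiple harmonic sum. -/
def S (q : ℂ) : ℕ → List ℕ → ℂ
  | _, [] => 1
  | 0, (_::_) => 0
  | (M+1), (k::l) => S q M (k::l) + Fq q k M * S q M l

lemma Fq_zero (q : ℂ) (k : ℕ) : Fq q k 0 = 0 := by
  cases k with
  | zero => simp [Fq, qint]
  | succ k => simp [Fq, qint]

lemma S_rec (q : ℂ) (M : ℕ) (k : ℕ) (l : List ℕ) :
    S q M (k::l) = ∑ m ∈ Finset.range M, Fq q k m * S q m l := by
  induction M with
  | zero => simp [S]
  | succ M ih => rw [Finset.sum_range_succ, ← ih]; rfl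

lemma tri (f : ℕ → ℕ → ℂ) (M : ℕ) :
    (∑ m ∈ Finset.range M, ∑ m' ∈ Finset.range M, f m m') =
      ((∑ m ∈ Finset.range M, ∑ m' ∈ Finset.range m, f m m') +
       (∑ m' ∈ Finset.range M, ∑ m ∈ Finset.range m', f m m')) +
      ∑ m ∈ Finset.range M, f m m := by
  induction M with
  | zero => simp
  | succ M ih =>
    simp only [Finset.sum_range_succ] at *
    rw [Finset.sum_add_distrib] at *
    ring_nf
    ring_nf at ih
    linear_combination ih


lemma S_nil (q : ℂ) (M : ℕ) : S q M [] = 1 := by cases M <;> rfl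

section
variable {q : ℂ} {m : ℕ} (hq : q ≠ 1) (hqm : m ≠ 0 → q ^ m ≠ 1)

include hq in
lemma qint_key : (1 - q) * qint q m = 1 - q ^ m := by
  unfold qint
  rw [mul_div_assoc']
  exact mul_div_cancel_left₀ _ (sub_ne_zero.mpr (Ne.symm hq))

include hq hqm in
lemma qint_ne (h : m ≠ 0) : qint q m ≠ 0 := by
  unfold qint
  exact div_ne_zero (sub_ne_zero.mpr (Ne.symm (hqm h)))
    (sub_ne_zero.mpr (Ne.symm hq))

include hq hqm in
lemma one_sub_q (h : m ≠ 0) : 1 - q = (1 - q ^ m) / qint q m := by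
  rw [eq_div_iff (qint_ne hq hqm h)]
  exact qint_key hq

include hq hqm

lemma Fq_mul_00 : Fq q 0 m * Fq q 0 m = Fq q 2 m - (1 - q) * Fq q 0 m := by
  rcases Nat.eq_zero_or_pos m with h | h
  · subst h; simp [Fq_zero]
  have hD : qint q m ≠ 0 := qint_ne hq hqm h.ne'
  have hmul : ∀ j : ℕ, q ^ (j * m) = (q ^ m) ^ j := fun j => by rw [mul_comm, pow_mul]
  rw [one_sub_q hq hqm h.ne']
  show q ^ m / qint q m * (q ^ m / qint q m) =
    q ^ (1 * m) / (qint q m) ^ 2 - (1 - q ^ m) / qint q m * (q ^ m / qint q m)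
  rw [hmul]
  field_simp
  ring

lemma Fq_mul_0s (l : ℕ) : Fq q 0 m * Fq q (l+1) m = Fq q (l+2) m := by
  rcases Nat.eq_zero_or_pos m with h | h
  · subst h; simp [Fq_zero]
  have hD : qint q m ≠ 0 := qint_ne hq hqm h.ne'
  have hmul : ∀ j : ℕ, q ^ (j * m) = (q ^ m) ^ j := fun j => by rw [mul_comm, pow_mul]
  show q ^ m / qint q m * (q ^ (l * m) / (qint q m) ^ (l+1)) =
    q ^ ((l+1) * m) / (qint q m) ^ (l + 2)
  rw [hmul, hmul]
  field_simp
  ring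

lemma Fq_mul_ss (k l : ℕ) : Fq q (k+1) m * Fq q (l+1) m
    = Fq q (k+l+2) m + (1 - q) * Fq q (k+l+1) m := by
  rcases Nat.eq_zero_or_pos m with h | h
  · subst h; simp [Fq_zero]
  have hD : qint q m ≠ 0 := qint_ne hq hqm h.ne'
  have hmul : ∀ j : ℕ, q ^ (j * m) = (q ^ m) ^ j := fun j => by rw [mul_comm, pow_mul]
  rw [one_sub_q hq hqm h.ne']
  show q ^ (k * m) / (qint q m) ^ (k+1) * (q ^ (l * m) / (qint q m) ^ (l+1)) =
    q ^ ((k+l+1) * m) / (qint q m) ^ (k+l+2)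
      + (1 - q ^ m)/ qint q m * (q ^ ((k+l) * m) / (qint q m) ^ (k+l+1))
  rw [hmul, hmul, hmul, hmul]
  field_simp
  ring

end

lemma zfin_nil (M : ℕ) (q : ℂ) : zfin M q [] = 1 := by
  rw [zfin]
  simp only [List.length_nil]
  have h : ∀ f : Fin 0 → Fin M,
      (if (StrictAnti fun i => ((f i : ℕ))) ∧ (∀ i, 0 < ((f i : ℕ))) then
        ∏ i : Fin 0, Fq q (([] : List ℕ).get i) ((f i : ℕ)) else 0) = 1 := by
    intro f
    rw [if_pos ⟨Subsingleton.strictAnti _, fun i => Fin.elim0 i⟩]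
    exact Finset.prod_of_isEmpty _
  rw [Finset.sum_congr rfl fun f _ => h f, Finset.sum_const, Finset.card_univ]
  simp


lemma anti_cons {r : ℕ} (m' : ℕ) (hm' : 0 < m') (g' : Fin r → ℕ) :
    ((StrictAnti (Fin.cons m' g' : Fin (r+1) → ℕ)) ∧ ∀ i, 0 < (Fin.cons m' g' : Fin (r+1) → ℕ) i)
    ↔ ((∀ i, g' i < m') ∧ StrictAnti g' ∧ ∀ i, 0 < g' i) := by
  constructor
  · rintro ⟨ha, hp⟩
    refine ⟨fun i => ?_, fun i j hij => ?_, fun i => ?_⟩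
    · have := ha (Fin.succ_pos i)
      simpa using this
    · have := ha (by exact_mod_cast Fin.succ_lt_succ_iff.mpr hij)
      simpa using this
    · have := hp i.succ
      simpa using this
  · rintro ⟨hb, ha, hp⟩
    constructor
    · intro i j hij
      induction j using Fin.cases with
      | zero => exact absurd hij (by simp)
      | succ j =>
        induction i using Fin.cases with
        | zero => simpa using hb j
        | succ i =>
          have : i < j := by exact_mod_cast Fin.succ_lt_succ_iff.mp hij
          simpa using ha this
    · intro i
      induction i using Fin.cases with
      | zero => simpa using hm'
      | succ i => simpa using hp i

open Finset in
lemma sum_restrict {M m' : ℕ} (hle : m' ≤ M) {r : ℕ} (G : (Fin r → ℕ) → ℂ)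
    (hG : ∀ h : Fin r → ℕ, ¬ (∀ i, h i < m') → G h = 0) :
    (∑ g : Fin r → Fin M, G (fun i => ((g i : ℕ)))) =
      ∑ g : Fin r → Fin m', G (fun i => ((g i : ℕ))) := by
  classical
  set e : (Fin r → Fin m') → (Fin r → Fin M) := fun g' i => Fin.castLE hle (g' i) with he
  have hinj : ∀ g₁ ∈ Finset.univ, ∀ g₂ ∈ Finset.univ, e g₁ = e g₂ → g₁ = g₂ := by
    intro g₁ _ g₂ _ h
    funext i
    have := congrFun h i
    simp only [he] at this
    exact Fin.castLE_injective hle this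
  have h1 : ∑ g : Fin r → Fin m', G (fun i => ((g i : ℕ)))
      = ∑ g ∈ Finset.univ.image e, G (fun i => ((g i : ℕ))) := by
    rw [Finset.sum_image hinj]
    refine Finset.sum_congr rfl fun g' _ => ?_
    congr 1
  rw [h1]
  refine (Finset.sum_subset (Finset.subset_univ _) fun g _ hg => ?_).symm
  refine hG _ fun hb => ?_
  exact hg (Finset.mem_image.mpr ⟨fun i => ⟨(g i : ℕ), hb i⟩, Finset.mem_univ _, by
    funext i; simp [he]⟩)

open Finset in
lemma zfin_cons (M : ℕ) (q : ℂ) (k : ℕ) (l : List ℕ) :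
    zfin M q (k::l) = ∑ m ∈ Finset.range M, Fq q k m * zfin m q l := by
  classical
  rw [zfin]
  simp only [List.length_cons]
  rw [← Fin.sum_univ_eq_sum_range (fun m' => Fq q k m' * zfin m' q l) M]
  rw [← Equiv.sum_comp (Fin.consEquiv fun _ => Fin M)]
  rw [Fintype.sum_prod_type]
  refine Finset.sum_congr rfl fun m _ => ?_
  -- inner sum over g : Fin l.length → Fin M
  rcases Nat.eq_zero_or_pos (m : ℕ) with hm | hm
  · rw [hm, Fq_zero, zero_mul]
    refine Finset.sum_eq_zero fun g _ => ?_
    refine if_neg ?_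
    rintro ⟨-, hp⟩
    have := hp 0
    simp only [Fin.consEquiv_apply] at this ⊢
    rw [show ((Fin.cons m g : Fin (l.length+1) → Fin M) 0 : ℕ) = (m : ℕ) by simp] at this
    omega
  · -- rewrite each term
    have hcoe : ∀ g : Fin l.length → Fin M,
        (fun i => ((Fin.cons m g : Fin (l.length+1) → Fin M) i : ℕ))
          = Fin.cons (m : ℕ) (fun i => ((g i : ℕ))) := by
      intro g; funext i
      induction i using Fin.cases <;> simp
    have hterm : ∀ g : Fin l.length → Fin M,
        (if (StrictAnti fun i => (((Fin.consEquiv fun _ => Fin M) (m, g) i : Fin M) : ℕ))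
            ∧ (∀ i : Fin (l.length+1), 0 < (((Fin.consEquiv fun _ => Fin M) (m, g) i : Fin M) : ℕ)) then
          ∏ i : Fin (l.length+1), Fq q ((k::l).get i)
            (((Fin.consEquiv fun _ => Fin M) (m, g) i : Fin M) : ℕ)
        else 0)
        = Fq q k m * (if ((∀ i, ((g i : ℕ)) < (m:ℕ)) ∧ (StrictAnti fun i => ((g i : ℕ)))
              ∧ ∀ i, 0 < ((g i : ℕ))) then
            ∏ i : Fin l.length, Fq q (l.get i) ((g i : ℕ)) else 0) := by
      intro g
      simp only [Fin.consEquiv_apply]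
      rw [mul_ite, mul_zero]
      have hpt : ∀ i : Fin (l.length+1), ((Fin.cons m g : Fin (l.length+1) → Fin M) i : ℕ)
          = (Fin.cons (↑m : ℕ) (fun j => ((g j : ℕ))) : Fin (l.length+1) → ℕ) i :=
        fun i => congrFun (hcoe g) i
      refine if_congr ?_ ?_ rfl
      · constructor
        · rintro ⟨ha, hp⟩
          have := (anti_cons (r := l.length) (m:ℕ) hm (fun j => ((g j : ℕ)))).mp
            ⟨by rwa [← hcoe g], fun i => by rw [← hpt i]; exact hp i⟩
          tauto
        · rintro ⟨hb, ha, hp⟩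
          have := (anti_cons (r := l.length) (m:ℕ) hm (fun j => ((g j : ℕ)))).mpr ⟨hb, ha, hp⟩
          exact ⟨by rw [hcoe g]; exact this.1, fun i => by rw [hpt i]; exact this.2 i⟩
      · rw [Fin.prod_univ_succ]
        simp
    rw [Finset.sum_congr rfl fun g _ => hterm g, ← Finset.mul_sum]
    congr 1
    -- now the reindexing
    refine Eq.trans (sum_restrict (le_of_lt m.isLt)
      (fun h => if ((∀ i, h i < (m:ℕ)) ∧ StrictAnti h ∧ ∀ i, 0 < h i) then
        ∏ i : Fin l.length, Fq q (l.get i) (h i) else 0) ?_) ?_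
    · intro h hb
      exact if_neg (by tauto)
    · rw [zfin]
      refine Finset.sum_congr rfl fun g' _ => ?_
      show (if _ then _ else _) = _
      refine if_congr ?_ rfl rfl
      exact and_iff_right fun i => (g' i).isLt

-- ### formal linear combinations of indices
abbrev LC : Type := List (CC × List ℕ)

def cmap (j : ℕ) (v : LC) : LC := v.map fun p => (p.1, j :: p.2)
def smap (d : CC) (v : LC) : LC := v.map fun p => (d * p.1, p.2)

def ccl : ℕ → ℕ → LC → LC
  | 0, 0, v => cmap 2 v ++ smap (-hb) (cmap 0 v)
  | 0, (l+1), v => cmap (l+2) v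
  | (j+1), 0, v => cmap (j+2) v
  | (j+1), (l+1), v => cmap (j+l+2) v ++ smap hb (cmap (j+l+1) v)

def stl : List ℕ → List ℕ → LC
  | [], B => [(1, B)]
  | (k::A), [] => [(1, k::A)]
  | (k::A), (k'::B) =>
      cmap k (stl A (k'::B)) ++ cmap k' (stl (k::A) B) ++ ccl k k' (stl A B)
termination_by A B => A.length + B.length

lemma stl_nil (B : List ℕ) : stl [] B = [(1, B)] := by rw [stl.eq_def]
lemma stl_cons_nil (k : ℕ) (A : List ℕ) : stl (k::A) [] = [(1, k::A)] := by rw [stl.eq_def]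
lemma stl_cc (k k' : ℕ) (A B : List ℕ) : stl (k::A) (k'::B) =
    cmap k (stl A (k'::B)) ++ cmap k' (stl (k::A) B) ++ ccl k k' (stl A B) := by
  rw [stl.eq_def]

def EH (v : LC) : H := (v.map fun p => p.1 • eword p.2).sum

lemma eword_nil : eword [] = 1 := rfl
lemma eword_cons (k : ℕ) (l : List ℕ) : eword (k::l) = ev k * eword l := by
  simp [eword]

lemma eword_mem (l : List ℕ) : eword l ∈ H1 := Submodule.subset_span ⟨l, rfl⟩

lemma EH_append (v w : LC) : EH (v ++ w) = EH v + EH w := by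
  simp [EH]

lemma EH_cmap (j : ℕ) (v : LC) : EH (cmap j v) = ev j * EH v := by
  induction v with
  | nil => simp [EH, cmap]
  | cons p v ih =>
    simp only [EH, cmap, List.map_cons, List.sum_cons] at *
    rw [ih, mul_add, mul_smul_comm, eword_cons]

lemma EH_smap (d : CC) (v : LC) : EH (smap d v) = d • EH v := by
  induction v with
  | nil => simp [EH, smap]
  | cons p v ih =>
    simp only [EH, smap, List.map_cons, List.sum_cons] at *
    rw [ih, smul_add, mul_smul]

lemma EH_single (B : List ℕ) : EH [(1, B)] = eword B := by
  simp [EH]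

lemma st_eword (st : H →ₗ[CC] H →ₗ[CC] H) (hst : IsStuffle st) :
    ∀ N A B, A.length + B.length ≤ N → st (eword A) (eword B) = EH (stl A B) := by
  intro N
  induction N with
  | zero =>
    intro A B hAB
    rw [Nat.le_zero, Nat.add_eq_zero] at hAB
    rw [List.length_eq_zero_iff.mp hAB.1, List.length_eq_zero_iff.mp hAB.2]
    rw [stl_nil, EH_single, eword_nil]
    exact hst.1 _
  | succ N ih =>
    intro A B hAB
    match A, B with
    | [], B => rw [stl_nil, EH_single, eword_nil]; exact hst.1 _
    | (k::A), [] => rw [stl_cons_nil, EH_single, eword_nil]; exact hst.2.1 _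
    | (k::A), (k'::B) =>
      simp only [List.length_cons] at hAB
      rw [eword_cons, eword_cons, hst.2.2 k k' _ _ (eword_mem A) (eword_mem B)]
      rw [← eword_cons, ← eword_cons]
      rw [ih A (k'::B) (by simp; omega), ih (k::A) B (by simp; omega),
          ih A B (by omega)]
      rw [stl_cc]
      rw [EH_append, EH_append, EH_cmap, EH_cmap]
      congr 1
      match k, k' with
      | 0, 0 =>
        show circ 0 0 * EH (stl A B) = EH (ccl 0 0 (stl A B))
        rw [ccl, EH_append, EH_cmap, EH_smap, EH_cmap, circ]
        rw [sub_mul, smul_mul_assoc]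
        rw [sub_eq_add_neg]
        exact congrArg _ (neg_smul hb _).symm
      | 0, (l+1) =>
        show circ 0 (l+1) * EH (stl A B) = EH (ccl 0 (l+1) (stl A B))
        rw [ccl, EH_cmap, circ]
      | (j+1), 0 =>
        show circ (j+1) 0 * EH (stl A B) = EH (ccl (j+1) 0 (stl A B))
        rw [ccl, EH_cmap, circ]
      | (j+1), (l+1) =>
        show circ (j+1) (l+1) * EH (stl A B)
          = EH (ccl (j+1) (l+1) (stl A B))
        rw [ccl, EH_append, EH_cmap, EH_smap, EH_cmap, circ]
        rw [add_mul, smul_mul_assoc]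

-- ### the numeric evaluation
def SEv (ρ : CC →ₐ[ℚ] ℂ) (q : ℂ) (M : ℕ) (v : LC) : ℂ :=
  (v.map fun p => ρ p.1 * S q M p.2).sum

variable (ρ : CC →ₐ[ℚ] ℂ) (q : ℂ)

lemma SEv_append (M : ℕ) (v w : LC) :
    SEv ρ q M (v ++ w) = SEv ρ q M v + SEv ρ q M w := by simp [SEv]

lemma SEv_smap (M : ℕ) (d : CC) (v : LC) :
    SEv ρ q M (smap d v) = ρ d * SEv ρ q M v := by
  induction v with
  | nil => simp [SEv, smap]
  | cons p v ih =>
    simp only [SEv, smap, List.map_cons, List.sum_cons] at *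
    rw [ih, map_mul]; ring

lemma SEv_single (M : ℕ) (B : List ℕ) : SEv ρ q M [(1, B)] = S q M B := by
  simp [SEv]

lemma SEv_cmap (M : ℕ) (j : ℕ) (v : LC) :
    SEv ρ q M (cmap j v) = ∑ m ∈ Finset.range M, Fq q j m * SEv ρ q m v := by
  induction v with
  | nil => simp [SEv, cmap]
  | cons p v ih =>
    simp only [SEv, cmap, List.map_cons, List.sum_cons] at *
    rw [ih, S_rec, Finset.mul_sum, ← Finset.sum_add_distrib]
    exact Finset.sum_congr rfl fun m _ => by ring

lemma key {n : ℕ} (hq : q ≠ 1) (hroot : ∀ m, 0 < m → m < n → q ^ m ≠ 1)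
    (hhb : ρ hb = 1 - q) :
    ∀ N A B, A.length + B.length ≤ N → ∀ M, M ≤ n →
      S q M A * S q M B = SEv ρ q M (stl A B) := by
  intro N
  induction N with
  | zero =>
    intro A B hAB M hM
    rw [Nat.le_zero, Nat.add_eq_zero] at hAB
    rw [List.length_eq_zero_iff.mp hAB.1, List.length_eq_zero_iff.mp hAB.2]
    rw [stl_nil, SEv_single, S_nil, one_mul]
  | succ N ih =>
    intro A B hAB M hM
    match A, B with
    | [], B =>
      rw [stl_nil, SEv_single, S_nil, one_mul]
    | (k::A), [] =>
      rw [stl_cons_nil, SEv_single, S_nil, mul_one]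
    | (k::A), (k'::B) =>
      simp only [List.length_cons] at hAB
      rw [stl_cc, SEv_append, SEv_append, SEv_cmap, SEv_cmap]
      rw [S_rec q M k A, S_rec q M k' B, Finset.sum_mul_sum]
      rw [tri (fun m m' => (Fq q k m * S q m A) * (Fq q k' m' * S q m' B)) M]
      congr 1
      · congr 1
        · -- T1
          refine Finset.sum_congr rfl fun m hm => ?_
          have hmM : m < M := Finset.mem_range.mp hm
          rw [← Finset.mul_sum, ← S_rec]
          have := ih A (k'::B) (by simp; omega) m (le_trans hmM.le hM)
          rw [mul_assoc, this]
        · -- T2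
          refine Finset.sum_congr rfl fun m' hm' => ?_
          have hmM : m' < M := Finset.mem_range.mp hm'
          have e1 : ∑ m ∈ Finset.range m', Fq q k m * S q m A * (Fq q k' m' * S q m' B)
              = Fq q k' m' * (S q m' (k::A) * S q m' B) := by
            rw [S_rec q m' k A, Finset.sum_mul, Finset.mul_sum]
            exact Finset.sum_congr rfl fun m _ => by ring
          rw [e1, ih (k::A) B (by simp; omega) m' (le_trans hmM.le hM)]
      · -- diagonal
        have hqm : ∀ m ∈ Finset.range M, (m ≠ 0 → q ^ m ≠ 1) := fun m hm h0 =>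
          hroot m (Nat.pos_of_ne_zero h0)
            (lt_of_lt_of_le (Finset.mem_range.mp hm) hM)
        have hdiag : ∀ m ∈ Finset.range M,
            Fq q k m * S q m A * (Fq q k' m * S q m B)
              = (Fq q k m * Fq q k' m) * SEv ρ q m (stl A B) := fun m hm => by
          rw [← ih A B (by omega) m
            (le_trans (Finset.mem_range.mp hm).le hM)]
          ring
        rw [Finset.sum_congr rfl hdiag]
        match k, k' with
        | 0, 0 =>
          have h2 : ∀ m ∈ Finset.range M, (Fq q 0 m * Fq q 0 m) * SEv ρ q m (stl A B)
              = Fq q 2 m * SEv ρ q m (stl A B)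
                - (1-q) * (Fq q 0 m * SEv ρ q m (stl A B)) := fun m hm => by
            rw [Fq_mul_00 hq (hqm m hm)]; ring
          rw [Finset.sum_congr rfl h2, Finset.sum_sub_distrib, ← Finset.mul_sum]
          show _ = SEv ρ q M (ccl 0 0 (stl A B))
          rw [ccl, SEv_append, SEv_smap, SEv_cmap, SEv_cmap, map_neg, hhb]
          ring
        | 0, (l+1) =>
          have h2 : ∀ m ∈ Finset.range M, (Fq q 0 m * Fq q (l+1) m) * SEv ρ q m (stl A B)
              = Fq q (l+2) m * SEv ρ q m (stl A B) := fun m hm => by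
            rw [Fq_mul_0s hq (hqm m hm)]
          rw [Finset.sum_congr rfl h2]
          show _ = SEv ρ q M (ccl 0 (l+1) (stl A B))
          rw [ccl, SEv_cmap]
        | (j+1), 0 =>
          have h2 : ∀ m ∈ Finset.range M, (Fq q (j+1) m * Fq q 0 m) * SEv ρ q m (stl A B)
              = Fq q (j+2) m * SEv ρ q m (stl A B) := fun m hm => by
            rw [mul_comm (Fq q (j+1) m), Fq_mul_0s hq (hqm m hm)]
          rw [Finset.sum_congr rfl h2]
          show _ = SEv ρ q M (ccl (j+1) 0 (stl A B))
          rw [ccl, SEv_cmap]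
        | (j+1), (l+1) =>
          have h2 : ∀ m ∈ Finset.range M, (Fq q (j+1) m * Fq q (l+1) m) * SEv ρ q m (stl A B)
              = Fq q (j+l+2) m * SEv ρ q m (stl A B)
                + (1-q) * (Fq q (j+l+1) m * SEv ρ q m (stl A B)) := fun m hm => by
            rw [Fq_mul_ss hq (hqm m hm)]; ring
          rw [Finset.sum_congr rfl h2, Finset.sum_add_distrib, ← Finset.mul_sum]
          show _ = SEv ρ q M (ccl (j+1) (l+1) (stl A B))
          rw [ccl, SEv_append, SEv_smap, SEv_cmap, SEv_cmap, hhb]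


lemma zfin_eq_S (q : ℂ) : ∀ (l : List ℕ) (M : ℕ), zfin M q l = S q M l := by
  intro l
  induction l with
  | nil => intro M; rw [zfin_nil, S_nil]
  | cons k l ih =>
    intro M
    rw [zfin_cons, S_rec]
    exact Finset.sum_congr rfl fun m _ => by rw [ih]


/-- For `n ≥ 2`, a primitive `n`-th root of unity `ζ_n`, and
`w, w' ∈ Ĥ¹`, `z_n(w *_q w') = z_n(w) · z_n(w')`. -/
theorem zn_stuffle (n : ℕ) (hn : 2 ≤ n) (ζ : ℂ) (hζ : IsPrimitiveRoot ζ n)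
    (st : H →ₗ[CC] H →ₗ[CC] H) (hst : IsStuffle st)
    (ρ : CC →ₐ[ℚ] ℂ) (hρ : ρ hb = 1 - ζ)
    (Z : H →+ ℂ) (hZ : IsZn ρ n ζ Z)
    (w w' : H) (hw : w ∈ H1) (hw' : w' ∈ H1) :
    Z (st w w') = Z w * Z w' := by
  have hq : ζ ≠ 1 := hζ.ne_one hn
  have hroot : ∀ m, 0 < m → m < n → ζ ^ m ≠ 1 := fun m h1 h2 =>
    hζ.pow_ne_one_of_pos_of_lt h1.ne' h2
  have hZE : ∀ v : LC, Z (EH v) = SEv ρ ζ n v := by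
    intro v
    induction v with
    | nil => simp [EH, SEv]
    | cons p v ih =>
      simp only [EH, SEv, List.map_cons, List.sum_cons] at *
      rw [map_add, ih, hZ.1, hZ.2, zfin_eq_S]
  have hEword : ∀ A B : List ℕ,
      Z (st (eword A) (eword B)) = Z (eword A) * Z (eword B) := by
    intro A B
    rw [st_eword st hst (A.length + B.length) A B le_rfl, hZE,
        ← key ρ ζ hq hroot hρ (A.length + B.length) A B le_rfl n le_rfl,
        hZ.2, hZ.2, zfin_eq_S, zfin_eq_S]
  have main : ∀ A : List ℕ, Z (st (eword A) w') = Z (eword A) * Z w' := by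
    intro A
    induction hw' using Submodule.span_induction with
    | mem x hx => obtain ⟨B, rfl⟩ := hx; exact hEword A B
    | zero => simp
    | add x y hx hy ihx ihy => rw [map_add, map_add, map_add, ihx, ihy]; ring
    | smul c x hx ihx => rw [map_smul, hZ.1, hZ.1, ihx]; ring
  induction hw using Submodule.span_induction with
  | mem x hx => obtain ⟨A, rfl⟩ := hx; exact main A
  | zero => simp
  | add x y hx hy ihx ihy =>
    rw [map_add, LinearMap.add_apply, map_add, map_add, ihx, ihy]; ring
  | smul c x hx ihx =>
    rw [map_smul, LinearMap.smul_apply, hZ.1, hZ.1, ihx]; ring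

end
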